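/- For all natural numbers m, t, n with m ≤ n < t, the following identity of rational numbers holds: ∑_{r=0}^{m} (−1)^r · C(m, r) · (n − m + r)! / (t − m + r)! = (n − m)! · (t − n + m − 1)! / ( t! · (t − n − 1)! ), where C(·,·) denotes the ordinary binomial coefficient. -/

import Mathlib

lemma key_fact (e : ℕ) : ∀ m a : ℕ,
    ∑ r ∈ Finset.range (m + 1),
        (-1 : ℚ) ^ r * (m.choose r : ℚ) * ((a + r).factorial : ℚ)
          / ((a + e + 1 + r).factorial : ℚ) =
      ((a.factorial : ℚ) * ((e + m).factorial : ℚ))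
        / (((a + e + 1 + m).factorial : ℚ) * ((e.factorial : ℚ))) := by
  intro m
  induction m with
  | zero =>
      intro a
      have hne : ((e.factorial : ℚ)) ≠ 0 := by exact_mod_cast Nat.factorial_ne_zero e
      simp [mul_div_mul_right _ _ hne]
  | succ m ih =>
    intro a
    have hstep : ∑ r ∈ Finset.range (m + 2),
        (-1 : ℚ) ^ r * ((m+1).choose r : ℚ) * ((a + r).factorial : ℚ)
          / ((a + e + 1 + r).factorial : ℚ)
        = (∑ r ∈ Finset.range (m + 1),
            (-1 : ℚ) ^ r * (m.choose r : ℚ) * ((a + r).factorial : ℚ)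
              / ((a + e + 1 + r).factorial : ℚ))
          - ∑ r ∈ Finset.range (m + 1),
            (-1 : ℚ) ^ r * (m.choose r : ℚ) * (((a+1) + r).factorial : ℚ)
              / (((a+1) + e + 1 + r).factorial : ℚ) := by
      rw [Finset.sum_range_succ' (fun r => (-1 : ℚ) ^ r * ((m+1).choose r : ℚ)
          * ((a + r).factorial : ℚ) / ((a + e + 1 + r).factorial : ℚ))]
      have hsplit : ∀ r ∈ Finset.range (m+1),
          (-1 : ℚ) ^ (r+1) * ((m+1).choose (r+1) : ℚ) * ((a + (r+1)).factorial : ℚ)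
            / ((a + e + 1 + (r+1)).factorial : ℚ)
          = (-1 : ℚ) ^ (r+1) * ((m).choose (r+1) : ℚ) * ((a + (r+1)).factorial : ℚ)
              / ((a + e + 1 + (r+1)).factorial : ℚ)
            - (-1 : ℚ) ^ r * (m.choose r : ℚ) * (((a+1) + r).factorial : ℚ)
              / (((a+1) + e + 1 + r).factorial : ℚ) := by
        intro r _
        have h1 : ((m+1).choose (r+1) : ℚ) = (m.choose r : ℚ) + (m.choose (r+1) : ℚ) := by
          exact_mod_cast congrArg (Nat.cast : ℕ → ℚ) (Nat.choose_succ_succ m r)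
        have h2 : a + (r+1) = (a+1) + r := by ring
        have h3 : a + e + 1 + (r+1) = (a+1) + e + 1 + r := by ring
        rw [h1, h2, h3]
        ring
      rw [Finset.sum_congr rfl hsplit, Finset.sum_sub_distrib]
      have htop : ∑ r ∈ Finset.range (m + 1),
          (-1 : ℚ) ^ (r+1) * ((m).choose (r+1) : ℚ) * ((a + (r+1)).factorial : ℚ)
            / ((a + e + 1 + (r+1)).factorial : ℚ)
          + (-1 : ℚ) ^ 0 * ((m+1).choose 0 : ℚ) * ((a + 0).factorial : ℚ)
            / ((a + e + 1 + 0).factorial : ℚ)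
          = ∑ r ∈ Finset.range (m + 1),
            (-1 : ℚ) ^ r * (m.choose r : ℚ) * ((a + r).factorial : ℚ)
              / ((a + e + 1 + r).factorial : ℚ) := by
        have := Finset.sum_range_succ' (fun r => (-1 : ℚ) ^ r * ((m).choose r : ℚ)
            * ((a + r).factorial : ℚ) / ((a + e + 1 + r).factorial : ℚ)) (m+1)
        beta_reduce at this
        rw [show ((m+1).choose 0 : ℚ) = ((m).choose 0 : ℚ) by simp, ← this,
          Finset.sum_range_succ]
        simp [Nat.choose_succ_self]
      linarith [htop]
    rw [hstep, ih a, ih (a+1)]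
    have hne : ∀ k : ℕ, ((k.factorial : ℚ)) ≠ 0 := by
      intro k; exact_mod_cast Nat.factorial_ne_zero k
    have f1 : ((a + e + 1 + (m+1)).factorial : ℚ)
        = ((a + e + 1 + m : ℕ) + 1 : ℚ) * ((a + e + 1 + m).factorial : ℚ) := by
      have : a + e + 1 + (m+1) = (a + e + 1 + m) + 1 := by ring
      rw [this, Nat.factorial_succ]; push_cast; ring
    have f2 : ((e + (m+1)).factorial : ℚ)
        = ((e + m : ℕ) + 1 : ℚ) * ((e + m).factorial : ℚ) := by
      have : e + (m+1) = (e + m) + 1 := by ring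
      rw [this, Nat.factorial_succ]; push_cast; ring
    have f3 : (((a+1)).factorial : ℚ) = ((a : ℚ) + 1) * (a.factorial : ℚ) := by
      rw [Nat.factorial_succ]; push_cast; ring
    have f4 : (((a+1) + e + 1 + m).factorial : ℚ)
        = ((a + e + 1 + m : ℕ) + 1 : ℚ) * ((a + e + 1 + m).factorial : ℚ) := by
      have : (a+1) + e + 1 + m = (a + e + 1 + m) + 1 := by ring
      rw [this, Nat.factorial_succ]; push_cast; ring
    rw [f1, f2, f3, f4]
    have h5 : ((a + e + 1 + m : ℕ) : ℚ) + 1 ≠ 0 := by positivity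
    field_simp
    push_cast
    ring

/-- Alternating-sum factorial identity (Lemma 4.3(2)): for `m ≤ n < t`,
`∑_{r=0}^{m} (−1)^r C(m,r) (n−m+r)!/(t−m+r)! = (n−m)!(t−n+m−1)!/(t!(t−n−1)!)`. -/
theorem stmt8 (m t n : ℕ) (hmn : m ≤ n) (hnt : n < t) :
    ∑ r ∈ Finset.range (m + 1),
        (-1 : ℚ) ^ r * (m.choose r : ℚ) * ((n - m + r).factorial : ℚ)
          / ((t - m + r).factorial : ℚ) =
      ((n - m).factorial : ℚ) * ((t - n + m - 1).factorial : ℚ)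
        / ((t.factorial : ℚ) * ((t - n - 1).factorial : ℚ)) := by
  have h := key_fact (t - n - 1) m (n - m)
  have e1 : ∀ r : ℕ, t - m + r = (n - m) + (t - n - 1) + 1 + r := by intro r; omega
  have e2 : t - n + m - 1 = (t - n - 1) + m := by omega
  have e3 : t = (n - m) + (t - n - 1) + 1 + m := by omega
  calc _ = ∑ r ∈ Finset.range (m + 1),
        (-1 : ℚ) ^ r * (m.choose r : ℚ) * (((n - m) + r).factorial : ℚ)
          / (((n - m) + (t - n - 1) + 1 + r).factorial : ℚ) := by
          refine Finset.sum_congr rfl fun r _ => ?_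
          rw [e1 r]
    _ = _ := by
          rw [h, e2]
          have e4 : (t.factorial : ℚ) = (((n - m) + (t - n - 1) + 1 + m).factorial : ℚ) := by
            rw [← e3]
          rw [e4]
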